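/- Baseline SGD convergence bound (equation for the no-freezing baseline). Let N ≥ 1 and let F : ℝ^N → ℝ be differentiable, L-smooth with L > 0, and bounded below by F⋆. Let (Ω, 𝓕, μ) be a probability space, let T ≥ 1 be a natural number, let M ≥ 1 (real), σ ≥ 0, and let η > 0 satisfy η ≤ 1 / (L (1 + 1/M)). Let θ_1, …, θ_{T+1} : Ω → ℝ^N and Δ_1, …, Δ_T : Ω → ℝ^N be measurable random vectors with θ_1 equal μ-a.e. to a constant x₁ ∈ ℝ^N, and θ_{t+1} = θ_t − η Δ_t μ-a.e. for each t ∈ {1,…,T}. Assume, for each t ∈ {1,…,T}: (i) μ-a.e., E[⟨∇F(θ_t), Δ_t⟩ | σ(θ_t)] = ‖∇F(θ_t)‖²; (ii) μ-a.e., E[‖Δ_t‖² | σ(θ_t)] ≤ (1 + 1/M) ‖∇F(θ_t)‖² + σ²/M; and (iii) the random variables F(θ_t), ‖∇F(θ_t)‖², ⟨∇F(θ_t), Δ_t⟩, and ‖Δ_t‖² are integrable. Then (1/T) Σ_{t=1}^T E[‖∇F(θ_t)‖²] ≤ 2 (F(x₁) − F⋆) / (η T) + L η σ² / M. -/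

import Mathlib

open MeasureTheory
open scoped RealInnerProductSpace

private lemma telescope_icc (f : ℕ → ℝ) (n : ℕ) :
    ∑ t ∈ Finset.Icc 1 n, (f t - f (t + 1)) = f 1 - f (n + 1) := by
  induction n with
  | zero => simp
  | succ n ih => rw [Finset.sum_Icc_succ_top (by omega), ih]; ring

/-- **Baseline SGD convergence bound** (no-freezing baseline). -/
theorem baseline_sgd_convergence
    {N : ℕ} (hN : 1 ≤ N)
    (F : EuclideanSpace ℝ (Fin N) → ℝ) (hFdiff : Differentiable ℝ F)
    (L : ℝ) (hL : 0 < L)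
    (hsmooth : ∀ x y : EuclideanSpace ℝ (Fin N),
      F y ≤ F x + ⟪gradient F x, y - x⟫ + L / 2 * ‖y - x‖ ^ 2)
    (Fstar : ℝ) (hFstar : ∀ x, Fstar ≤ F x)
    {Ω : Type*} [MeasurableSpace Ω] (μ : Measure Ω) [IsProbabilityMeasure μ]
    (T : ℕ) (hT : 1 ≤ T)
    (M σ η : ℝ) (hM : 1 ≤ M) (hσ : 0 ≤ σ)
    (hη0 : 0 < η) (hη : η ≤ 1 / (L * (1 + 1 / M)))
    (θ Δ : ℕ → Ω → EuclideanSpace ℝ (Fin N))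
    (hθmeas : ∀ t ∈ Finset.Icc 1 (T + 1), Measurable (θ t))
    (hΔmeas : ∀ t ∈ Finset.Icc 1 T, Measurable (Δ t))
    (x₁ : EuclideanSpace ℝ (Fin N)) (hθ1 : ∀ᵐ ω ∂μ, θ 1 ω = x₁)
    (hstep : ∀ t ∈ Finset.Icc 1 T, ∀ᵐ ω ∂μ, θ (t + 1) ω = θ t ω - η • Δ t ω)
    (hcond1 : ∀ t ∈ Finset.Icc 1 T,
      μ[fun ω => ⟪gradient F (θ t ω), Δ t ω⟫ |
          MeasurableSpace.comap (θ t) inferInstance]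
        =ᵐ[μ] fun ω => ‖gradient F (θ t ω)‖ ^ 2)
    (hcond2 : ∀ t ∈ Finset.Icc 1 T, ∀ᵐ ω ∂μ,
      (μ[fun ω' => ‖Δ t ω'‖ ^ 2 | MeasurableSpace.comap (θ t) inferInstance]) ω ≤
        (1 + 1 / M) * ‖gradient F (θ t ω)‖ ^ 2 + σ ^ 2 / M)
    (hint : ∀ t ∈ Finset.Icc 1 T,
      Integrable (fun ω => F (θ t ω)) μ ∧
      Integrable (fun ω => ‖gradient F (θ t ω)‖ ^ 2) μ ∧
      Integrable (fun ω => ⟪gradient F (θ t ω), Δ t ω⟫) μ ∧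
      Integrable (fun ω => ‖Δ t ω‖ ^ 2) μ) :
    (1 / (T : ℝ)) * ∑ t ∈ Finset.Icc 1 T, ∫ ω, ‖gradient F (θ t ω)‖ ^ 2 ∂μ ≤
      2 * (F x₁ - Fstar) / (η * T) + L * η * σ ^ 2 / M := by
  have hM0 : (0:ℝ) < M := lt_of_lt_of_le one_pos hM
  have hMc : (0:ℝ) < 1 + 1 / M := by positivity
  set c : ℝ := L * η ^ 2 * σ ^ 2 / (2 * M) with hc
  set A : ℕ → ℝ := fun t => ∫ ω, F (θ t ω) ∂μ with hA
  set G : ℕ → ℝ := fun t => ∫ ω, ‖gradient F (θ t ω)‖ ^ 2 ∂μ with hG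
  have key : ∀ t ∈ Finset.Icc 1 T,
      Integrable (fun ω => F (θ (t + 1) ω)) μ ∧
      A (t + 1) ≤ A t - (η / 2) * G t + c := by
    intro t ht
    obtain ⟨hF_int, hg_int, hip_int, hΔ_int⟩ := hint t ht
    rw [Finset.mem_Icc] at ht
    have hmθ1 : Measurable (θ (t + 1)) := hθmeas (t + 1) (Finset.mem_Icc.2 ⟨by omega, by omega⟩)
    have hmθ : Measurable (θ t) := hθmeas t (Finset.mem_Icc.2 ⟨ht.1, by omega⟩)
    have hle : MeasurableSpace.comap (θ t) inferInstance ≤ _ := hmθ.comap_le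
    -- pointwise descent inequality
    have hpt : ∀ᵐ ω ∂μ, F (θ (t + 1) ω) ≤
        F (θ t ω) - η * ⟪gradient F (θ t ω), Δ t ω⟫ + L / 2 * η ^ 2 * ‖Δ t ω‖ ^ 2 := by
      filter_upwards [hstep t (Finset.mem_Icc.2 ht)] with ω hω
      have hs := hsmooth (θ t ω) (θ (t + 1) ω)
      rw [hω] at hs
      have h1 : θ t ω - η • Δ t ω - θ t ω = -(η • Δ t ω) := by abel
      rw [h1, inner_neg_right, real_inner_smul_right, norm_neg, norm_smul] at hs
      rw [hω]
      have h2 : (‖η‖ * ‖Δ t ω‖) ^ 2 = η ^ 2 * ‖Δ t ω‖ ^ 2 := by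
        rw [mul_pow, Real.norm_eq_abs, sq_abs]
      nlinarith [hs]
    have hRHS_int : Integrable (fun ω =>
        F (θ t ω) - η * ⟪gradient F (θ t ω), Δ t ω⟫ + L / 2 * η ^ 2 * ‖Δ t ω‖ ^ 2) μ :=
      (hF_int.sub (hip_int.const_mul η)).add (hΔ_int.const_mul _)
    have hF1_int : Integrable (fun ω => F (θ (t + 1) ω)) μ := by
      refine Integrable.mono' (hRHS_int.abs.add (integrable_const |Fstar|))
        (hFdiff.continuous.measurable.comp hmθ1).aestronglyMeasurable ?_
      filter_upwards [hpt] with ω hω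
      simp only [Pi.add_apply]
      rw [Real.norm_eq_abs, abs_le]
      constructor
      · have := hFstar (θ (t + 1) ω)
        have := neg_abs_le Fstar
        have := abs_nonneg (F (θ t ω) - η * ⟪gradient F (θ t ω), Δ t ω⟫
          + L / 2 * η ^ 2 * ‖Δ t ω‖ ^ 2)
        linarith
      · have := le_abs_self (F (θ t ω) - η * ⟪gradient F (θ t ω), Δ t ω⟫
          + L / 2 * η ^ 2 * ‖Δ t ω‖ ^ 2)
        have := abs_nonneg Fstar
        linarith
    refine ⟨hF1_int, ?_⟩
    -- tower property identities
    have e1 : ∫ ω, ⟪gradient F (θ t ω), Δ t ω⟫ ∂μ = G t := by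
      calc ∫ ω, ⟪gradient F (θ t ω), Δ t ω⟫ ∂μ
          = ∫ ω, (μ[fun ω' => ⟪gradient F (θ t ω'), Δ t ω'⟫ |
              MeasurableSpace.comap (θ t) inferInstance]) ω ∂μ :=
            (integral_condExp hle).symm
        _ = G t := integral_congr_ae (hcond1 t (Finset.mem_Icc.2 ht))
    have e2 : ∫ ω, ‖Δ t ω‖ ^ 2 ∂μ ≤ (1 + 1 / M) * G t + σ ^ 2 / M := by
      calc ∫ ω, ‖Δ t ω‖ ^ 2 ∂μ
          = ∫ ω, (μ[fun ω' => ‖Δ t ω'‖ ^ 2 |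
              MeasurableSpace.comap (θ t) inferInstance]) ω ∂μ := (integral_condExp hle).symm
        _ ≤ ∫ ω, ((1 + 1 / M) * ‖gradient F (θ t ω)‖ ^ 2 + σ ^ 2 / M) ∂μ :=
            integral_mono_ae integrable_condExp
              ((hg_int.const_mul _).add (integrable_const _)) (hcond2 t (Finset.mem_Icc.2 ht))
        _ = (1 + 1 / M) * G t + σ ^ 2 / M := by
            have hmul : Integrable (fun ω => (1 + 1 / M) * ‖gradient F (θ t ω)‖ ^ 2) μ :=
              hg_int.const_mul _
            rw [integral_add hmul (integrable_const _), integral_const_mul, integral_const]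
            simp [hG]
    have hmain : A (t + 1) ≤ A t - η * G t + L / 2 * η ^ 2 * ∫ ω, ‖Δ t ω‖ ^ 2 ∂μ := by
      have hsub : Integrable
          (fun ω => F (θ t ω) - η * ⟪gradient F (θ t ω), Δ t ω⟫) μ :=
        hF_int.sub (hip_int.const_mul η)
      have hmul : Integrable (fun ω => L / 2 * η ^ 2 * ‖Δ t ω‖ ^ 2) μ :=
        hΔ_int.const_mul _
      have hmul2 : Integrable (fun ω => η * ⟪gradient F (θ t ω), Δ t ω⟫) μ :=
        hip_int.const_mul _
      calc A (t + 1) ≤ ∫ ω, (F (θ t ω) - η * ⟪gradient F (θ t ω), Δ t ω⟫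
            + L / 2 * η ^ 2 * ‖Δ t ω‖ ^ 2) ∂μ := integral_mono_ae hF1_int hRHS_int hpt
        _ = A t - η * G t + L / 2 * η ^ 2 * ∫ ω, ‖Δ t ω‖ ^ 2 ∂μ := by
            rw [integral_add hsub hmul, integral_sub hF_int hmul2, integral_const_mul,
              integral_const_mul, e1]
    have hG0 : 0 ≤ G t := integral_nonneg fun ω => by positivity
    have hηL : η * (L * (1 + 1 / M)) ≤ 1 := by
      rw [le_div_iff₀ (by positivity)] at hη
      linarith
    have h5 := mul_le_mul_of_nonneg_left e2 (by positivity : (0:ℝ) ≤ L / 2 * η ^ 2)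
    have h3 := mul_le_mul_of_nonneg_right hηL
      (mul_nonneg (by positivity : (0:ℝ) ≤ η / 2) hG0)
    have h4 : L / 2 * η ^ 2 * ((1 + 1 / M) * G t + σ ^ 2 / M) =
        η * (L * (1 + 1 / M)) * (η / 2 * G t) + L * η ^ 2 * σ ^ 2 / (2 * M) := by ring
    rw [hc]
    linarith
  -- sum the per-step inequality
  have hsum : (η / 2) * ∑ t ∈ Finset.Icc 1 T, G t ≤ A 1 - A (T + 1) + T * c := by
    have h1 : ∑ t ∈ Finset.Icc 1 T, (η / 2) * G t ≤
        ∑ t ∈ Finset.Icc 1 T, ((A t - A (t + 1)) + c) := by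
      refine Finset.sum_le_sum fun t ht => ?_
      have := (key t ht).2
      linarith
    rw [Finset.mul_sum]
    calc ∑ t ∈ Finset.Icc 1 T, (η / 2) * G t
        ≤ ∑ t ∈ Finset.Icc 1 T, ((A t - A (t + 1)) + c) := h1
      _ = (A 1 - A (T + 1)) + T * c := by
          rw [Finset.sum_add_distrib, telescope_icc, Finset.sum_const,
            Nat.card_Icc]
          simp [mul_comm]
  have hA1 : A 1 = F x₁ := by
    rw [hA]
    calc ∫ ω, F (θ 1 ω) ∂μ = ∫ _ω, F x₁ ∂μ :=
          integral_congr_ae (by filter_upwards [hθ1] with ω h; rw [h])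
      _ = F x₁ := by simp
  have hAT : Fstar ≤ A (T + 1) := by
    have hFT1 := (key T (Finset.mem_Icc.2 ⟨hT, le_refl T⟩)).1
    calc Fstar = ∫ _ω, Fstar ∂μ := by simp
      _ ≤ A (T + 1) := integral_mono (integrable_const _) hFT1 fun ω => hFstar _
  have hT0 : (0:ℝ) < T := by exact_mod_cast hT
  have hS : ∑ t ∈ Finset.Icc 1 T, G t ≤
      (2 / η) * (F x₁ - Fstar) + T * (L * η * σ ^ 2 / M) := by
    have h2 : (η / 2) * ∑ t ∈ Finset.Icc 1 T, G t ≤ (F x₁ - Fstar) + T * c := by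
      rw [hA1] at hsum; linarith
    rw [hc] at h2
    have := mul_le_mul_of_nonneg_left h2 (by positivity : (0:ℝ) ≤ 2 / η)
    calc ∑ t ∈ Finset.Icc 1 T, G t
        = (2 / η) * ((η / 2) * ∑ t ∈ Finset.Icc 1 T, G t) := by
          field_simp
      _ ≤ (2 / η) * ((F x₁ - Fstar) + T * (L * η ^ 2 * σ ^ 2 / (2 * M))) := this
      _ = (2 / η) * (F x₁ - Fstar) + T * (L * η * σ ^ 2 / M) := by
          field_simp
  calc (1 / (T : ℝ)) * ∑ t ∈ Finset.Icc 1 T, G t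
      ≤ (1 / (T : ℝ)) * ((2 / η) * (F x₁ - Fstar) + T * (L * η * σ ^ 2 / M)) :=
        mul_le_mul_of_nonneg_left hS (by positivity)
    _ = 2 * (F x₁ - Fstar) / (η * T) + L * η * σ ^ 2 / M := by
        field_simp
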